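/- Let a ≥ 1 and b ≥ 2 be integers. The map T_{a,b} : Λ^{a+b} → Λ^{a+b} is not ergodic with respect to Lebesgue measure: there exists a measurable set E ⊆ Λ^{a+b} with T_{a,b}^{-1}(E) = E up to a Lebesgue-null set such that both E and Λ^{a+b}∖E have positive Lebesgue measure. -/

import Mathlib

open MeasureTheory Filter Topology

/-- `Λⁿ`: points of `ℝⁿ` with nonnegative, nondecreasing coordinates. -/
def Lambda (n : ℕ) : Set (Fin n → ℝ) := {x | (∀ i, 0 ≤ x i) ∧ Monotone x}

/-- The vector `(x₁,…,x_a, x_{a+1}-x_a,…,x_{a+b}-x_a)` (0-based indexing). -/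
noncomputable def subVec (a b : ℕ) (x : Fin (a + b) → ℝ) : Fin (a + b) → ℝ :=
  fun j => if (j : ℕ) < a then x j else x j - x ⟨a - 1, by have := j.isLt; omega⟩

/-- The map `T_{a,b}`: nondecreasing rearrangement of `subVec a b x`. -/
noncomputable def Tab (a b : ℕ) (x : Fin (a + b) → ℝ) : Fin (a + b) → ℝ :=
  subVec a b x ∘ Tuple.sort (subVec a b x)

namespace S5aux

/-- order-statistic characterization of the sorted vector -/
lemma sorted_le_iff {n : ℕ} (v : Fin n → ℝ) (j : Fin n) (t : ℝ) :
    (v ∘ Tuple.sort v) j ≤ t ↔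
      ∃ S : Finset (Fin n), (j : ℕ) + 1 ≤ S.card ∧ ∀ i ∈ S, v i ≤ t := by
  constructor
  · intro h
    refine ⟨(Finset.Iic j).image (Tuple.sort v), ?_, ?_⟩
    · rw [Finset.card_image_of_injective _ (Tuple.sort v).injective, Fin.card_Iic]
    · intro i hi
      simp only [Finset.mem_image, Finset.mem_Iic] at hi
      obtain ⟨p, hp, rfl⟩ := hi
      exact le_trans (Tuple.monotone_sort v hp) h
  · rintro ⟨S, hcard, hS⟩
    obtain ⟨p, hpS, hjp⟩ : ∃ p ∈ S.image (Tuple.sort v).symm, j ≤ p := by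
      by_contra hcon
      push_neg at hcon
      have hsub : S.image (Tuple.sort v).symm ⊆ Finset.Iio j := fun p hp =>
        Finset.mem_Iio.2 (hcon p hp)
      have hle := Finset.card_le_card hsub
      rw [Finset.card_image_of_injective _ (Tuple.sort v).symm.injective, Fin.card_Iio] at hle
      omega
    simp only [Finset.mem_image] at hpS
    obtain ⟨i, hiS, rfl⟩ := hpS
    have h1 : (v ∘ Tuple.sort v) j ≤ (v ∘ Tuple.sort v) ((Tuple.sort v).symm i) :=
      Tuple.monotone_sort v hjp
    have h2 : (v ∘ Tuple.sort v) ((Tuple.sort v).symm i) = v i := by simp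
    exact h2 ▸ h1 |>.trans (hS i hiS)

lemma measurable_subVec (a b : ℕ) : Measurable (subVec a b) := by
  apply measurable_pi_lambda
  intro j
  unfold subVec
  by_cases h : (j : ℕ) < a
  · simpa [h] using measurable_pi_apply j
  · simp only [h, if_false]
    exact (measurable_pi_apply j).sub (measurable_pi_apply _)

lemma measurable_Tab (a b : ℕ) : Measurable (Tab a b) := by
  apply measurable_pi_lambda
  intro j
  apply measurable_of_Iic
  intro t
  have hset : (fun x => Tab a b x j) ⁻¹' Set.Iic t =
      ⋃ S : Finset (Fin (a + b)), ⋃ _ : (j : ℕ) + 1 ≤ S.card,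
        ⋂ i ∈ S, {x | subVec a b x i ≤ t} := by
    ext x
    simp only [Set.mem_preimage, Set.mem_Iic, Set.mem_iUnion, Set.mem_iInter,
      Set.mem_setOf_eq, exists_prop]
    exact sorted_le_iff (subVec a b x) j t
  rw [hset]
  refine MeasurableSet.iUnion fun S => MeasurableSet.iUnion fun _ =>
    MeasurableSet.biInter (Set.to_countable _) fun i _ => ?_
  exact measurableSet_le ((measurable_pi_apply i).comp (measurable_subVec a b))
    measurable_const

lemma subVec_nonneg {a b : ℕ} {x : Fin (a + b) → ℝ} (hx : x ∈ Lambda (a + b))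
    (j : Fin (a + b)) : 0 ≤ subVec a b x j := by
  unfold subVec
  by_cases h : (j : ℕ) < a
  · simpa [h] using hx.1 j
  · simp only [h, if_false, sub_nonneg]
    apply hx.2
    rw [Fin.le_def]
    simp only []
    omega

lemma tab_mem {a b : ℕ} {x : Fin (a + b) → ℝ} (hx : x ∈ Lambda (a + b)) :
    Tab a b x ∈ Lambda (a + b) := by
  refine ⟨fun i => subVec_nonneg hx _, ?_⟩
  exact Tuple.monotone_sort (subVec a b x)

lemma tab_iter_mem {a b : ℕ} {x : Fin (a + b) → ℝ} (hx : x ∈ Lambda (a + b)) (k : ℕ) :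
    (Tab a b)^[k] x ∈ Lambda (a + b) := by
  induction k with
  | zero => exact hx
  | succ k ih => rw [Function.iterate_succ_apply']; exact tab_mem ih

/-- the last index of `Fin (a+b)` -/
def lastIdx (a b : ℕ) (hab : 0 < a + b) : Fin (a + b) := ⟨a + b - 1, by omega⟩

/-- each entry of `subVec` is at most the last coordinate -/
lemma subVec_le_last {a b : ℕ} (ha : 1 ≤ a) (hb : 1 ≤ b) (hab : 0 < a + b)
    {x : Fin (a + b) → ℝ} (hx : x ∈ Lambda (a + b)) (j : Fin (a + b)) :
    subVec a b x j ≤ x (lastIdx a b hab) := by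
  have hmono : x j ≤ x (lastIdx a b hab) := by
    apply hx.2
    rw [Fin.le_def]
    show _ ≤ a + b - 1
    have := j.isLt
    omega
  unfold subVec
  by_cases h : (j : ℕ) < a
  · simpa [h] using hmono
  · simp only [h, if_false]
    have h0 : 0 ≤ x ⟨a - 1, by omega⟩ := hx.1 _
    linarith

lemma tab_last_le {a b : ℕ} (ha : 1 ≤ a) (hb : 1 ≤ b) (hab : 0 < a + b)
    {x : Fin (a + b) → ℝ} (hx : x ∈ Lambda (a + b)) :
    Tab a b x (lastIdx a b hab) ≤ x (lastIdx a b hab) :=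
  subVec_le_last ha hb hab hx _

lemma tab_last_ge {a b : ℕ} (ha : 1 ≤ a) (hb : 1 ≤ b) (hab : 0 < a + b)
    (x : Fin (a + b) → ℝ) :
    x (lastIdx a b hab) - x ⟨a - 1, by omega⟩ ≤ Tab a b x (lastIdx a b hab) := by
  show x ⟨a + b - 1, by omega⟩ - x ⟨a - 1, by omega⟩ ≤ Tab a b x ⟨a + b - 1, by omega⟩
  set v := subVec a b x with hv
  set σ := Tuple.sort v with hσ
  have hlast : v ⟨a + b - 1, by omega⟩ = x ⟨a + b - 1, by omega⟩ - x ⟨a - 1, by omega⟩ := by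
    rw [hv]
    unfold subVec
    have : ¬ ((⟨a + b - 1, by omega⟩ : Fin (a + b)) : ℕ) < a := by simp; omega
    simp only [this, if_false]
  have hpos : σ.symm ⟨a + b - 1, by omega⟩ ≤ (⟨a + b - 1, by omega⟩ : Fin (a + b)) := by
    rw [Fin.le_def]
    show _ ≤ a + b - 1
    have := (σ.symm (⟨a + b - 1, by omega⟩ : Fin (a + b))).isLt
    omega
  have hmono : (v ∘ σ) (σ.symm ⟨a + b - 1, by omega⟩) ≤ (v ∘ σ) ⟨a + b - 1, by omega⟩ :=
    Tuple.monotone_sort v hpos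
  have heq : (v ∘ σ) (σ.symm ⟨a + b - 1, by omega⟩) = v ⟨a + b - 1, by omega⟩ := by simp
  calc x ⟨a + b - 1, by omega⟩ - x ⟨a - 1, by omega⟩
      = v ⟨a + b - 1, by omega⟩ := hlast.symm
    _ = (v ∘ σ) (σ.symm ⟨a + b - 1, by omega⟩) := heq.symm
    _ ≤ (v ∘ σ) ⟨a + b - 1, by omega⟩ := hmono
    _ = Tab a b x ⟨a + b - 1, by omega⟩ := rfl

lemma sum_tab {a b : ℕ} (x : Fin (a + b) → ℝ) :
    ∑ j, Tab a b x j = ∑ j, subVec a b x j :=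
  Fintype.sum_equiv (Tuple.sort (subVec a b x)) _ _ (fun _ => rfl)

lemma sum_subVec {a b : ℕ} (ha : 1 ≤ a) (hb : 1 ≤ b) (x : Fin (a + b) → ℝ) :
    ∑ j, subVec a b x j = ∑ j, x j - (b : ℝ) * x ⟨a - 1, by omega⟩ := by
  set s := x ⟨a - 1, by omega⟩ with hs
  have hpt : ∀ j : Fin (a + b), subVec a b x j =
      x j - (if (j : ℕ) < a then 0 else s) := by
    intro j
    unfold subVec
    by_cases h : (j : ℕ) < a
    · simp [h]
    · simp [h, hs]
  rw [Finset.sum_congr rfl (fun j _ => hpt j), Finset.sum_sub_distrib]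
  congr 1
  have hrange : ∑ j : Fin (a + b), (if (j : ℕ) < a then (0 : ℝ) else s) =
      ∑ i ∈ Finset.range (a + b), (if i < a then (0 : ℝ) else s) :=
    Fin.sum_univ_eq_sum_range (fun i => if i < a then (0 : ℝ) else s) (a + b)
  rw [hrange]
  rw [Finset.range_eq_Ico, ← Finset.sum_Ico_consecutive _ (Nat.zero_le a) (by omega : a ≤ a + b)]
  have h1 : ∑ i ∈ Finset.Ico 0 a, (if i < a then (0 : ℝ) else s) = 0 := by
    apply Finset.sum_eq_zero
    intro i hi
    simp only [Finset.mem_Ico] at hi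
    simp [hi.2]
  have h2 : ∑ i ∈ Finset.Ico a (a + b), (if i < a then (0 : ℝ) else s) = (b : ℝ) * s := by
    have hc : ∀ i ∈ Finset.Ico a (a + b), (if i < a then (0 : ℝ) else s) = s := by
      intro i hi
      simp only [Finset.mem_Ico] at hi
      simp [Nat.not_lt.mpr hi.1]
    rw [Finset.sum_congr rfl hc, Finset.sum_const, Nat.card_Ico]
    have hab : a + b - a = b := by omega
    rw [hab, nsmul_eq_mul]
  rw [h1, h2, zero_add]

/-- the potential `Φ(x) = x_last - (Σ x)/b` -/
noncomputable def Phi (a b : ℕ) (hab : 0 < a + b) (x : Fin (a + b) → ℝ) : ℝ :=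
  x (lastIdx a b hab) - (∑ j, x j) / b

lemma phi_step {a b : ℕ} (ha : 1 ≤ a) (hb : 1 ≤ b) (hab : 0 < a + b)
    {x : Fin (a + b) → ℝ} (hx : x ∈ Lambda (a + b)) :
    Phi a b hab x ≤ Phi a b hab (Tab a b x) := by
  have hb0 : (0 : ℝ) < b := by exact_mod_cast hb
  have h1 := tab_last_ge ha hb hab x
  have h2 : ∑ j, Tab a b x j = ∑ j, x j - (b : ℝ) * x ⟨a - 1, by omega⟩ := by
    rw [sum_tab, sum_subVec ha hb]
  have hb0' : (b : ℝ) ≠ 0 := ne_of_gt hb0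
  unfold Phi
  rw [h2, sub_div, mul_div_cancel_left₀ _ hb0']
  linarith [h1]

lemma phi_iter {a b : ℕ} (ha : 1 ≤ a) (hb : 1 ≤ b) (hab : 0 < a + b)
    {x : Fin (a + b) → ℝ} (hx : x ∈ Lambda (a + b)) (k : ℕ) :
    Phi a b hab x ≤ Phi a b hab ((Tab a b)^[k] x) := by
  induction k with
  | zero => simp
  | succ k ih =>
      rw [Function.iterate_succ_apply']
      exact le_trans ih (phi_step ha hb hab (tab_iter_mem hx k))

lemma last_ge_phi {a b : ℕ} (ha : 1 ≤ a) (hb : 1 ≤ b) (hab : 0 < a + b)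
    {x : Fin (a + b) → ℝ} (hx : x ∈ Lambda (a + b)) :
    Phi a b hab x ≤ x (lastIdx a b hab) := by
  have hb0 : (0 : ℝ) < b := by exact_mod_cast hb
  have hsum : 0 ≤ ∑ j, x j := Finset.sum_nonneg fun j _ => hx.1 j
  unfold Phi
  have : 0 ≤ (∑ j, x j) / b := div_nonneg hsum (le_of_lt hb0)
  linarith

lemma measurable_Lambda (n : ℕ) : MeasurableSet (Lambda n) := by
  have heq : Lambda n = (⋂ i, {x : Fin n → ℝ | 0 ≤ x i}) ∩
      ⋂ i, ⋂ j, ⋂ _ : i ≤ j, {x : Fin n → ℝ | x i ≤ x j} := by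
    ext x
    simp only [Lambda, Set.mem_inter_iff, Set.mem_iInter, Set.mem_setOf_eq]
    constructor
    · rintro ⟨h1, h2⟩
      exact ⟨h1, fun i j hij => h2 hij⟩
    · rintro ⟨h1, h2⟩
      exact ⟨h1, fun i j hij => h2 i j hij⟩
  rw [heq]
  exact (MeasurableSet.iInter fun i =>
      measurableSet_le measurable_const (measurable_pi_apply i)).inter
    (MeasurableSet.iInter fun i => MeasurableSet.iInter fun j => MeasurableSet.iInter fun _ =>
      measurableSet_le (measurable_pi_apply i) (measurable_pi_apply j))

end S5aux

/-- for `a ≥ 1`, `b ≥ 2`, the map `T_{a,b} : Λ^{a+b} → Λ^{a+b}` is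
not ergodic with respect to Lebesgue measure restricted to `Λ^{a+b}`. -/
theorem statement5 (a b : ℕ) (ha : 1 ≤ a) (hb : 2 ≤ b) :
    ∃ E : Set (Fin (a + b) → ℝ), MeasurableSet E ∧ E ⊆ Lambda (a + b) ∧
      volume (symmDiff (Lambda (a + b) ∩ Tab a b ⁻¹' E) E) = 0 ∧
      0 < volume E ∧ 0 < volume (Lambda (a + b) \ E) := by
  classical
  have hab : 0 < a + b := by omega
  have hb1 : 1 ≤ b := by omega
  set L : Fin (a + b) := S5aux.lastIdx a b hab with hLdef
  refine ⟨Lambda (a + b) ∩ ⋂ k : ℕ, {x | 1 < (Tab a b)^[k] x L}, ?_, ?_, ?_, ?_, ?_⟩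
  · -- measurability
    refine (S5aux.measurable_Lambda (a + b)).inter (MeasurableSet.iInter fun k => ?_)
    exact measurableSet_lt measurable_const
      ((measurable_pi_apply L).comp ((S5aux.measurable_Tab a b).iterate k))
  · exact Set.inter_subset_left
  · -- exact invariance, hence null symmetric difference
    have hEeq : Lambda (a + b) ∩ Tab a b ⁻¹'
          (Lambda (a + b) ∩ ⋂ k : ℕ, {x | 1 < (Tab a b)^[k] x L})
        = Lambda (a + b) ∩ ⋂ k : ℕ, {x | 1 < (Tab a b)^[k] x L} := by
      ext x
      simp only [Set.mem_inter_iff, Set.mem_preimage, Set.mem_iInter, Set.mem_setOf_eq]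
      constructor
      · rintro ⟨hxΛ, hTΛ, hTk⟩
        refine ⟨hxΛ, fun k => ?_⟩
        cases k with
        | zero =>
            have h0 := hTk 0
            simp only [Function.iterate_zero, id_eq] at h0
            have hle := S5aux.tab_last_le ha hb1 hab hxΛ
            simpa using lt_of_lt_of_le h0 hle
        | succ k =>
            have hk := hTk k
            rw [← Function.iterate_succ_apply] at hk
            exact hk
      · rintro ⟨hxΛ, hxk⟩
        refine ⟨hxΛ, S5aux.tab_mem hxΛ, fun k => ?_⟩
        rw [← Function.iterate_succ_apply]
        exact hxk (k + 1)
    rw [hEeq, symmDiff_self]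
    simp
  · -- positive measure of E
    set c1 : ℝ := 1 / ((a + b : ℝ)) ^ 2 with hc1def
    have hN1 : (1 : ℝ) ≤ (a + b : ℝ) := by exact_mod_cast hab
    have hc1pos : 0 < c1 := by rw [hc1def]; positivity
    have hsq : ((a + b : ℝ)) ^ 2 * c1 = 1 := by rw [hc1def]; field_simp
    have hNc1le : (a + b : ℝ) * c1 ≤ 1 := by nlinarith
    set B1 : Set (Fin (a + b) → ℝ) := Set.univ.pi fun i : Fin (a + b) =>
      if i.val = a + b - 1 then Set.Ioo (10 : ℝ) 11
      else Set.Ioo ((i.val : ℝ) * c1) (((i.val : ℝ) + 1) * c1) with hB1def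
    have hB1sub : B1 ⊆ Lambda (a + b) ∩ ⋂ k : ℕ, {x | 1 < (Tab a b)^[k] x L} := by
      intro x hx
      rw [hB1def] at hx
      have hmem : ∀ i : Fin (a + b), x i ∈ (if i.val = a + b - 1 then Set.Ioo (10 : ℝ) 11
          else Set.Ioo ((i.val : ℝ) * c1) (((i.val : ℝ) + 1) * c1)) :=
        fun i => Set.mem_univ_pi.mp hx i
      have hlast : x L ∈ Set.Ioo (10 : ℝ) 11 := by
        have h := hmem L
        have hLv : L.val = a + b - 1 := rfl
        rwa [if_pos hLv] at h
      have hother : ∀ i : Fin (a + b), i.val ≠ a + b - 1 →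
          (i.val : ℝ) * c1 < x i ∧ x i < ((i.val : ℝ) + 1) * c1 := by
        intro i hi
        have h := hmem i
        rw [if_neg hi] at h
        exact ⟨h.1, h.2⟩
      have hxΛ : x ∈ Lambda (a + b) := by
        constructor
        · intro i
          by_cases h : i.val = a + b - 1
          · have hh := hmem i
            rw [if_pos h] at hh
            linarith [hh.1]
          · have hh := (hother i h).1
            have : 0 ≤ ((i : ℕ) : ℝ) * c1 := by positivity
            linarith
        · intro i j hij
          rcases eq_or_lt_of_le hij with heq | hlt
          · exact le_of_eq (congrArg x heq)
          · have hij' : (i : ℕ) < (j : ℕ) := hlt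
            by_cases hj : j.val = a + b - 1
            · have hi : i.val ≠ a + b - 1 := by omega
              have h1 := (hother i hi).2
              have h2 := hmem j
              rw [if_pos hj] at h2
              have hcast' : i.val + 1 ≤ a + b := i.isLt
              have hcast : (i.val : ℝ) + 1 ≤ (a + b : ℝ) := by exact_mod_cast hcast'
              nlinarith [h2.1, hc1pos]
            · have hi : i.val ≠ a + b - 1 := by have := j.isLt; omega
              have h1 := (hother i hi).2
              have h2 := (hother j hj).1
              have hcast' : i.val + 1 ≤ j.val := hij'
              have hcast : (i.val : ℝ) + 1 ≤ (j.val : ℝ) := by exact_mod_cast hcast'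
              nlinarith [hc1pos]
      have herase : ∑ j ∈ Finset.univ.erase L, x j ≤ 1 := by
        have hboundEach : ∀ j ∈ Finset.univ.erase L, x j ≤ (a + b : ℝ) * c1 := by
          intro j hj
          have hjne : j ≠ L := (Finset.mem_erase.mp hj).1
          have hjv : j.val ≠ a + b - 1 := by
            intro hcon
            exact hjne (Fin.ext hcon)
          have hx2 := (hother j hjv).2
          have hcast' : j.val + 1 ≤ a + b := j.isLt
          have hcast : (j.val : ℝ) + 1 ≤ (a + b : ℝ) := by exact_mod_cast hcast'
          nlinarith [hc1pos]
        have hcard := Finset.sum_le_card_nsmul _ _ _ hboundEach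
        have hcardval : (Finset.univ.erase L).card = a + b - 1 := by
          rw [Finset.card_erase_of_mem (Finset.mem_univ L), Finset.card_univ,
            Fintype.card_fin]
        rw [hcardval, nsmul_eq_mul] at hcard
        have hcast : ((a + b - 1 : ℕ) : ℝ) ≤ (a + b : ℝ) := by
          exact_mod_cast Nat.sub_le _ _
        have h5 : ((a + b - 1 : ℕ) : ℝ) * ((a + b : ℝ) * c1) ≤
            (a + b : ℝ) * ((a + b : ℝ) * c1) :=
          mul_le_mul_of_nonneg_right hcast (by positivity)
        have h6 : (a + b : ℝ) * ((a + b : ℝ) * c1) = 1 := by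
          rw [← mul_assoc, ← sq]; exact hsq
        calc ∑ j ∈ Finset.univ.erase L, x j
            ≤ ((a + b - 1 : ℕ) : ℝ) * ((a + b : ℝ) * c1) := hcard
          _ ≤ (a + b : ℝ) * ((a + b : ℝ) * c1) := h5
          _ = 1 := h6
      have hsumall : ∑ j, x j ≤ 12 := by
        have hsplit := Finset.add_sum_erase Finset.univ x (Finset.mem_univ L)
        have hxL : x L < 11 := hlast.2
        linarith [hsplit, herase]
      have hPhi : 1 < S5aux.Phi a b hab x := by
        have hL10 : 10 < x L := hlast.1
        have hsum0 : 0 ≤ ∑ j, x j := Finset.sum_nonneg fun j _ => hxΛ.1 j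
        have hb0 : (0 : ℝ) < b := by exact_mod_cast hb1
        have hbcast : (2 : ℝ) ≤ (b : ℝ) := by exact_mod_cast hb
        have hdiv : (∑ j, x j) / (b : ℝ) ≤ 6 := by
          rw [div_le_iff₀ hb0]
          nlinarith
        show 1 < x (S5aux.lastIdx a b hab) - (∑ j, x j) / b
        rw [← hLdef]
        linarith
      refine ⟨hxΛ, ?_⟩
      simp only [Set.mem_iInter, Set.mem_setOf_eq]
      intro k
      have h1 := S5aux.phi_iter ha hb1 hab hxΛ k
      have h2 := S5aux.last_ge_phi ha hb1 hab (S5aux.tab_iter_mem hxΛ k)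
      rw [← hLdef] at h2
      linarith
    have hB1vol : 0 < volume B1 := by
      rw [hB1def, volume_pi_pi]
      refine CanonicallyOrderedAdd.prod_pos.mpr fun i _ => ?_
      by_cases h : i.val = a + b - 1
      · rw [if_pos h, Real.volume_Ioo]
        rw [ENNReal.ofReal_pos]
        norm_num
      · rw [if_neg h, Real.volume_Ioo]
        rw [ENNReal.ofReal_pos]
        nlinarith [hc1pos]
    exact lt_of_lt_of_le hB1vol (measure_mono hB1sub)
  · -- positive measure of the complement
    set c2 : ℝ := 1 / (a + b : ℝ) with hc2def
    have hN1 : (1 : ℝ) ≤ (a + b : ℝ) := by exact_mod_cast hab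
    have hc2pos : 0 < c2 := by rw [hc2def]; positivity
    have hNc2 : (a + b : ℝ) * c2 = 1 := by rw [hc2def]; field_simp
    set B2 : Set (Fin (a + b) → ℝ) := Set.univ.pi fun i : Fin (a + b) =>
      Set.Ioo ((i.val : ℝ) * c2) (((i.val : ℝ) + 1) * c2) with hB2def
    have hB2sub : B2 ⊆ Lambda (a + b) \
        (Lambda (a + b) ∩ ⋂ k : ℕ, {x | 1 < (Tab a b)^[k] x L}) := by
      intro x hx
      rw [hB2def] at hx
      have hmem : ∀ i : Fin (a + b), x i ∈ Set.Ioo ((i.val : ℝ) * c2) (((i.val : ℝ) + 1) * c2) :=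
        fun i => Set.mem_univ_pi.mp hx i
      have hxΛ : x ∈ Lambda (a + b) := by
        constructor
        · intro i
          have hh := (hmem i).1
          have : 0 ≤ ((i : ℕ) : ℝ) * c2 := by positivity
          linarith
        · intro i j hij
          rcases eq_or_lt_of_le hij with heq | hlt
          · exact le_of_eq (congrArg x heq)
          · have hij' : (i : ℕ) < (j : ℕ) := hlt
            have h1 := (hmem i).2
            have h2 := (hmem j).1
            have hcast' : i.val + 1 ≤ j.val := hij'
            have hcast : (i.val : ℝ) + 1 ≤ (j.val : ℝ) := by exact_mod_cast hcast'
            nlinarith [hc2pos]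
      have hxL1 : x L < 1 := by
        have hh := (hmem L).2
        have hLval : ((L.val : ℕ) : ℝ) + 1 = (a + b : ℝ) := by
          show ((a + b - 1 : ℕ) : ℝ) + 1 = (a + b : ℝ)
          rw [Nat.cast_sub (by omega : 1 ≤ a + b)]
          push_cast
          ring
        rw [hLval, hNc2] at hh
        exact hh
      refine ⟨hxΛ, fun hmemE => ?_⟩
      have hk0 := Set.mem_iInter.mp hmemE.2 0
      simp only [Function.iterate_zero, id_eq, Set.mem_setOf_eq] at hk0
      linarith
    have hB2vol : 0 < volume B2 := by
      rw [hB2def, volume_pi_pi]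
      refine CanonicallyOrderedAdd.prod_pos.mpr fun i _ => ?_
      rw [Real.volume_Ioo, ENNReal.ofReal_pos]
      nlinarith [hc2pos]
    exact lt_of_lt_of_le hB2vol (measure_mono hB2sub)
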